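/- Let h, g : ℤ → ℝ be finitely supported filters satisfying ∑_{l∈ℤ} h_l h_{l+2k} = (1/2)·δ_{k,0} and ∑_{l∈ℤ} g_l g_{l+2k} = (1/2)·δ_{k,0} for every integer k, with h and g vanishing outside {0,…,L−1}, and let L_m = (2^m − 1)(L − 1) + 1. Let T ≥ L_m be an integer and let y_0, …, y_{T−1} be square-integrable real random variables (possibly heteroskedastic) with E y_t = 0 for all t and E(y_s y_t) = 0 for all s ≠ t. Define circularly, for t ∈ ℤ/Tℤ, W_{m,n,t} = ∑_{l∈ℤ} v_{m,n,l} y_{t−(l mod T)} and z_{m,n,t} = ∑_{i≥0} ∑_{j>i} v_{m,n,i} v_{m,n,j} y_{t−(i mod T)} y_{t−(j mod T)}. Then for every 0 ≤ n ≤ 2^m − 1 and every t, E z_{m,n,t} = 0, and consequently E[ ∑_{t∈ℤ/Tℤ} W_{m,n,t}² ] = (1/2^m) · E[ ∑_{t∈ℤ/Tℤ} y_t² ]. -/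

import Mathlib

open MeasureTheory ProbabilityTheory Filter

/-- Filter selector `u_n`: equals `g` if `n mod 4 ∈ {0,3}` and `h` if `n mod 4 ∈ {1,2}`. -/
noncomputable def uF (g h : ℤ → ℝ) (n : ℕ) : ℤ → ℝ :=
  fun l => if n % 4 = 0 ∨ n % 4 = 3 then g l else h l

/-- MODWPT wavelet packet filters `v_{m,n}`, defined recursively by `v_{1,0} = g`,
`v_{1,1} = h`, and `v_{m,n,l} = ∑_k u_{n,k} v_{m-1, ⌊n/2⌋, l - 2^(m-1) k}`. -/
noncomputable def wp (g h : ℤ → ℝ) : ℕ → ℕ → ℤ → ℝ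
  | 0, _, _ => 0
  | 1, n, l => if n = 0 then g l else h l
  | (m + 2), n, l => ∑ᶠ k : ℤ, uF g h n k * wp g h (m + 1) (n / 2) (l - 2 ^ (m + 1) * k)

section aux
variable {L : ℕ} {h g : ℤ → ℝ}
  (hsupp : ∀ l : ℤ, (l < 0 ∨ (L : ℤ) ≤ l) → h l = 0)
  (gsupp : ∀ l : ℤ, (l < 0 ∨ (L : ℤ) ≤ l) → g l = 0)
  (horth_h : ∀ k : ℤ,
      ∑ᶠ l : ℤ, h l * h (l + 2 * k) = (1 / 2) * (if k = 0 then 1 else 0))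
  (horth_g : ∀ k : ℤ,
      ∑ᶠ l : ℤ, g l * g (l + 2 * k) = (1 / 2) * (if k = 0 then 1 else 0))

lemma uF_eq (n : ℕ) : uF g h n = g ∨ uF g h n = h := by
  by_cases hc : n % 4 = 0 ∨ n % 4 = 3
  · exact Or.inl (by funext l; simp [uF, hc])
  · exact Or.inr (by funext l; simp [uF, hc])

include hsupp gsupp in
lemma uF_supp (n : ℕ) (k : ℤ) (hk : k < 0 ∨ (L : ℤ) ≤ k) : uF g h n k = 0 := by
  rcases uF_eq (g := g) (h := h) n with e | e <;> rw [e]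
  exacts [gsupp k hk, hsupp k hk]

include horth_h horth_g in
lemma uF_orth (n : ℕ) (k : ℤ) :
    ∑ᶠ l : ℤ, uF g h n l * uF g h n (l + 2 * k) = (1 / 2) * (if k = 0 then 1 else 0) := by
  rcases uF_eq (g := g) (h := h) n with e | e <;> rw [e]
  exacts [horth_g k, horth_h k]

include hsupp gsupp in
lemma wp_supp : ∀ m n (l : ℤ), wp g h (m + 1) n l ≠ 0 →
    0 ≤ l ∧ l ≤ (2 ^ (m + 1) - 1) * ((L : ℤ) - 1) := by
  intro m
  induction m with
  | zero =>
    intro n l hl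
    simp only [wp] at hl
    have : (0 ≤ l ∧ l ≤ (L : ℤ) - 1) := by
      by_contra hc
      push_neg at hc
      have hor : l < 0 ∨ (L : ℤ) ≤ l := by omega
      rcases n with _ | n <;> simp [gsupp l hor, hsupp l hor] at hl
    simpa using this
  | succ m ih =>
    intro n l hl
    rw [show m + 1 + 1 = m + 2 by ring] at hl
    simp only [wp] at hl
    have : ∃ k : ℤ, uF g h n k * wp g h (m + 1) (n / 2) (l - 2 ^ (m + 1) * k) ≠ 0 := by
      by_contra hc
      push_neg at hc
      exact hl (finsum_eq_zero_of_forall_eq_zero hc)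
    obtain ⟨k, hk⟩ := this
    have h1 : uF g h n k ≠ 0 := fun e => hk (by simp [e])
    have h2 : wp g h (m + 1) (n / 2) (l - 2 ^ (m + 1) * k) ≠ 0 := fun e => hk (by simp [e])
    have hk1 : 0 ≤ k ∧ k ≤ (L : ℤ) - 1 := by
      by_contra hc; push_neg at hc
      exact h1 (uF_supp hsupp gsupp n k (by omega))
    obtain ⟨hk2, hk3⟩ := ih (n / 2) _ h2
    have hp : (0:ℤ) < 2 ^ (m + 1) := by positivity
    constructor
    · nlinarith [hk1.1, hk1.2]
    · have : l ≤ (2 ^ (m + 1) - 1) * ((L : ℤ) - 1) + 2 ^ (m + 1) * k := by linarith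
      have h4 : (2:ℤ) ^ (m + 1) * k ≤ 2 ^ (m + 1) * ((L:ℤ) - 1) := by
        exact mul_le_mul_of_nonneg_left hk1.2 (by positivity)
      calc l ≤ (2 ^ (m + 1) - 1) * ((L : ℤ) - 1) + 2 ^ (m + 1) * ((L:ℤ) - 1) := by linarith
        _ = (2 ^ (m + 2) - 1) * ((L : ℤ) - 1) := by ring

include hsupp gsupp in
lemma wp_eq_sum (m n : ℕ) (l : ℤ) :
    wp g h (m + 2) n l =
      ∑ k ∈ Finset.Icc (0:ℤ) ((L:ℤ) - 1),
        uF g h n k * wp g h (m + 1) (n / 2) (l - 2 ^ (m + 1) * k) := by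
  show (∑ᶠ k : ℤ, _) = _
  apply finsum_eq_sum_of_support_subset
  intro k hk
  simp only [Function.mem_support] at hk
  have : uF g h n k ≠ 0 := fun e => hk (by simp [e])
  simp only [Finset.coe_Icc, Set.mem_Icc]
  by_contra hc; push_neg at hc
  exact this (uF_supp hsupp gsupp n k (by by_contra hc2; push_neg at hc2; omega))

include hsupp gsupp in
lemma wp_finsum_eq_sum (m n : ℕ) (f : ℤ → ℝ) :
    ∑ᶠ l : ℤ, wp g h (m + 1) n l * f l =
      ∑ l ∈ Finset.Icc (0:ℤ) ((2 ^ (m + 1) - 1) * ((L:ℤ) - 1)),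
        wp g h (m + 1) n l * f l := by
  apply finsum_eq_sum_of_support_subset
  intro l hl
  simp only [Function.mem_support] at hl
  have : wp g h (m + 1) n l ≠ 0 := fun e => hl (by simp [e])
  have := wp_supp hsupp gsupp m n l this
  simp only [Finset.coe_Icc, Set.mem_Icc]
  omega

include hsupp gsupp in
lemma uF_finsum_eq_sum (n : ℕ) (f : ℤ → ℝ) :
    ∑ᶠ k : ℤ, uF g h n k * f k =
      ∑ k ∈ Finset.Icc (0:ℤ) ((L:ℤ) - 1), uF g h n k * f k := by
  apply finsum_eq_sum_of_support_subset
  intro k hk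
  simp only [Function.mem_support] at hk
  have : uF g h n k ≠ 0 := fun e => hk (by simp [e])
  simp only [Finset.coe_Icc, Set.mem_Icc]
  by_contra hc; push_neg at hc
  exact this (uF_supp hsupp gsupp n k (by omega))

include hsupp gsupp horth_h horth_g in
lemma wp_orth : ∀ m n (j : ℤ),
    ∑ᶠ l : ℤ, wp g h (m + 1) n l * wp g h (m + 1) n (l + 2 ^ (m + 1) * j)
      = (1 / 2 ^ (m + 1)) * (if j = 0 then 1 else 0) := by
  intro m
  induction m with
  | zero =>
    intro n j
    by_cases hn : n = 0
    · subst hn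
      simp only [wp, if_pos rfl, pow_one, zero_add]
      simpa using horth_g j
    · simp only [wp, if_neg hn, pow_one, zero_add]
      simpa using horth_h j
  | succ m ih =>
    intro n j
    set c : ℤ := 2 ^ (m + 1) with hcdef
    have hcpos : (0:ℤ) < c := by positivity
    set SL := Finset.Icc (0:ℤ) ((L:ℤ) - 1) with hSL
    set M := (2 ^ (m + 2) - 1) * ((L:ℤ) - 1) with hM
    set v : ℤ → ℝ := wp g h (m + 1) (n / 2) with hv
    have hD : (2:ℤ) ^ (m + 2) = 2 * c := by rw [hcdef]; ring
    have key : ∀ k k' : ℤ, k ∈ SL →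
        (∑ l ∈ Finset.Icc (0:ℤ) M, v (l - c * k) * v (l + 2 ^ (m + 2) * j - c * k'))
          = (1 / 2 ^ (m + 1)) * (if 2 * j + k - k' = 0 then 1 else 0) := by
      intro k k' hk
      rw [hSL, Finset.mem_Icc] at hk
      have h1 : (∑ l ∈ Finset.Icc (0:ℤ) M, v (l - c*k) * v (l + 2^(m+2)*j - c*k'))
          = ∑ᶠ l : ℤ, v (l - c*k) * v (l + 2^(m+2)*j - c*k') := by
        symm
        apply finsum_eq_sum_of_support_subset
        intro l hl
        simp only [Function.mem_support] at hl
        have hvne : v (l - c*k) ≠ 0 := fun e => hl (by simp [e])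
        have hb := wp_supp hsupp gsupp m (n/2) _ hvne
        simp only [Finset.coe_Icc, Set.mem_Icc]
        have hck : 0 ≤ c * k := mul_nonneg hcpos.le hk.1
        have hck2 : c * k ≤ c * ((L:ℤ) - 1) := mul_le_mul_of_nonneg_left hk.2 hcpos.le
        constructor
        · linarith [hb.1]
        · have : l ≤ (2 ^ (m + 1) - 1) * ((L : ℤ) - 1) + c * ((L:ℤ) - 1) := by
            linarith [hb.2]
          calc l ≤ (2 ^ (m + 1) - 1) * ((L : ℤ) - 1) + c * ((L:ℤ) - 1) := this
            _ = M := by rw [hM, hcdef]; ring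
      rw [h1]
      have h2 : (∑ᶠ l : ℤ, v (l - c*k) * v (l + 2^(m+2)*j - c*k'))
          = ∑ᶠ l : ℤ, v l * v (l + 2^(m+1) * (2*j + k - k')) := by
        rw [← finsum_comp_equiv (Equiv.addRight (c*k))]
        apply finsum_congr; intro l
        simp only [Equiv.coe_addRight]
        congr 2
        · ring
        · rw [← hcdef, hD]; ring
      rw [h2, ih (n/2) (2*j + k - k')]
    have e1 : (∑ᶠ l : ℤ, wp g h (m+2) n l * wp g h (m+2) n (l + 2^(m+2)*j))
        = ∑ l ∈ Finset.Icc (0:ℤ) M, wp g h (m+2) n l * wp g h (m+2) n (l + 2^(m+2)*j) :=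
      wp_finsum_eq_sum hsupp gsupp (m+1) n _
    have e2 : ∀ l : ℤ, wp g h (m+2) n l * wp g h (m+2) n (l + 2^(m+2)*j)
        = ∑ k ∈ SL, ∑ k' ∈ SL,
            (uF g h n k * uF g h n k') * (v (l - c*k) * v (l + 2^(m+2)*j - c*k')) := by
      intro l
      rw [wp_eq_sum hsupp gsupp m n l, wp_eq_sum hsupp gsupp m n (l + 2^(m+2)*j),
        Finset.sum_mul_sum]
      apply Finset.sum_congr rfl; intro k _
      apply Finset.sum_congr rfl; intro k' _
      rw [← hv, ← hcdef]
      ring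
    calc (∑ᶠ l : ℤ, wp g h (m+2) n l * wp g h (m+2) n (l + 2^(m+2)*j))
        = ∑ l ∈ Finset.Icc (0:ℤ) M, ∑ k ∈ SL, ∑ k' ∈ SL,
            (uF g h n k * uF g h n k') * (v (l - c*k) * v (l + 2^(m+2)*j - c*k')) := by
          rw [e1]; exact Finset.sum_congr rfl fun l _ => e2 l
      _ = ∑ k ∈ SL, ∑ k' ∈ SL, (uF g h n k * uF g h n k') *
            ∑ l ∈ Finset.Icc (0:ℤ) M, v (l - c*k) * v (l + 2^(m+2)*j - c*k') := by
          rw [Finset.sum_comm]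
          apply Finset.sum_congr rfl; intro k _
          rw [Finset.sum_comm]
          apply Finset.sum_congr rfl; intro k' _
          rw [Finset.mul_sum]
      _ = ∑ k ∈ SL, ∑ k' ∈ SL, (uF g h n k * uF g h n k') *
            ((1 / 2 ^ (m + 1)) * (if 2 * j + k - k' = 0 then 1 else 0)) := by
          apply Finset.sum_congr rfl; intro k hk
          apply Finset.sum_congr rfl; intro k' _
          rw [key k k' hk]
      _ = ∑ k ∈ SL, uF g h n k * uF g h n (k + 2*j) * (1 / 2 ^ (m + 1)) := by
          apply Finset.sum_congr rfl; intro k hk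
          rw [Finset.sum_eq_single (k + 2*j)]
          · have hcond : 2 * j + k - (k + 2*j) = 0 := by ring
            rw [if_pos hcond]; ring
          · intro b _ hb
            have : ¬ (2 * j + k - b = 0) := by omega
            simp [this]
          · intro hnr
            have : uF g h n (k + 2*j) = 0 := by
              apply uF_supp hsupp gsupp
              rw [hSL, Finset.mem_Icc] at hnr
              omega
            simp [this]
      _ = (1 / 2 ^ (m + 1)) * ∑ᶠ k : ℤ, uF g h n k * uF g h n (k + 2*j) := by
          rw [uF_finsum_eq_sum hsupp gsupp n (fun k => uF g h n (k + 2*j)), Finset.mul_sum]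
          apply Finset.sum_congr rfl; intro k _
          ring
      _ = (1 / 2 ^ (m + 1 + 1)) * (if j = 0 then 1 else 0) := by
          rw [uF_orth horth_h horth_g n j]
          ring


end aux

lemma mul_integrable {Ω : Type} [MeasureSpace Ω] {f g : Ω → ℝ}
    (hf : MemLp f 2) (hg : MemLp g 2) : Integrable (fun ω => f ω * g ω) := by
  have := MemLp.smul (φ := f) (f := g) (p := 2) (q := 2) (r := 1) hg hf
  rw [memLp_one_iff_integrable] at this
  simpa [Pi.smul_apply', smul_eq_mul, Pi.mul_def] using this

/-- For (possibly heteroskedastic) mean-zero uncorrelated square-integrable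
random variables `y_0, …, y_{T-1}` with `T ≥ L_m`, the circularly filtered MODWPT
coefficients satisfy `E z_{m,n,t} = 0` for all `t`, and consequently
`E[∑_t W_{m,n,t}²] = (1/2^m) E[∑_t y_t²]`. -/
theorem stmt10 (Ω : Type) [MeasureSpace Ω] [IsProbabilityMeasure (ℙ : Measure Ω)]
    (L : ℕ) (hLpos : 0 < L)
    (h g : ℤ → ℝ)
    (hsupp : ∀ l : ℤ, (l < 0 ∨ (L : ℤ) ≤ l) → h l = 0)
    (gsupp : ∀ l : ℤ, (l < 0 ∨ (L : ℤ) ≤ l) → g l = 0)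
    (horth_h : ∀ k : ℤ,
      ∑ᶠ l : ℤ, h l * h (l + 2 * k) = (1 / 2) * (if k = 0 then 1 else 0))
    (horth_g : ∀ k : ℤ,
      ∑ᶠ l : ℤ, g l * g (l + 2 * k) = (1 / 2) * (if k = 0 then 1 else 0))
    (m : ℕ) (hm : 1 ≤ m)
    (T : ℕ) [NeZero T] (hT : (2 ^ m - 1) * (L - 1) + 1 ≤ T)
    (y : ZMod T → Ω → ℝ)
    (hL2 : ∀ t : ZMod T, MemLp (y t) 2)
    (hmean : ∀ t : ZMod T, ∫ ω, y t ω = 0)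
    (huncorr : ∀ s t : ZMod T, s ≠ t → ∫ ω, y s ω * y t ω = 0)
    (n : ℕ) (hn : n ≤ 2 ^ m - 1) :
    (∀ t : ZMod T,
      ∫ ω, (∑ᶠ i : ℤ, ∑ᶠ j : ℤ,
        if 0 ≤ i ∧ i < j then
          wp g h m n i * wp g h m n j * y (t - (i : ZMod T)) ω * y (t - (j : ZMod T)) ω
        else 0) = 0)
    ∧ ∫ ω, ∑ t : ZMod T, (∑ᶠ l : ℤ, wp g h m n l * y (t - (l : ZMod T)) ω) ^ 2
        = (1 / 2 ^ m) * ∫ ω, ∑ t : ZMod T, (y t ω) ^ 2 := by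
  obtain ⟨m', rfl⟩ : ∃ m', m = m' + 1 := ⟨m - 1, by omega⟩
  set v : ℤ → ℝ := wp g h (m' + 1) n with hvdef
  set M : ℤ := (2 ^ (m' + 1) - 1) * ((L : ℤ) - 1) with hMdef
  set SM := Finset.Icc (0 : ℤ) M with hSM
  have hMT : M < (T : ℤ) := by
    have h2 : (1 : ℕ) ≤ 2 ^ (m' + 1) := Nat.one_le_two_pow
    have h1 : ((2 ^ (m' + 1) - 1) * (L - 1) : ℕ) < T := by omega
    have hM' : (((2 ^ (m' + 1) - 1) * (L - 1) : ℕ) : ℤ) = M := by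
      push_cast [Nat.cast_sub h2, Nat.cast_sub hLpos]
      ring
    rw [← hM']
    exact_mod_cast h1
  have hv0 : ∀ l : ℤ, l ∉ SM → v l = 0 := by
    intro l hl
    by_contra hc
    have := wp_supp hsupp gsupp m' n l hc
    rw [hSM, Finset.mem_Icc] at hl
    exact hl ⟨this.1, this.2⟩
  have hinj : ∀ a ∈ SM, ∀ b ∈ SM, (a : ZMod T) = (b : ZMod T) → a = b := by
    intro a ha b hb hab
    rw [hSM, Finset.mem_Icc] at ha hb
    have := (ZMod.intCast_eq_intCast_iff' a b T).mp hab
    rwa [Int.emod_eq_of_lt ha.1 (by omega), Int.emod_eq_of_lt hb.1 (by omega)] at this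
  have hMul : ∀ (s t : ZMod T), Integrable (fun ω => y s ω * y t ω) :=
    fun s t => mul_integrable (hL2 s) (hL2 t)
  constructor
  · -- Part 1
    intro t
    have inner_eq : ∀ (i : ℤ) (ω : Ω),
        (∑ᶠ j : ℤ, if 0 ≤ i ∧ i < j then
          v i * v j * y (t - (i : ZMod T)) ω * y (t - (j : ZMod T)) ω else 0)
        = ∑ j ∈ SM, if 0 ≤ i ∧ i < j then
            v i * v j * y (t - (i : ZMod T)) ω * y (t - (j : ZMod T)) ω else 0 := by
      intro i ω
      apply finsum_eq_sum_of_support_subset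
      intro j hj
      simp only [Function.mem_support] at hj
      by_contra hjS
      apply hj
      split_ifs
      · simp [hv0 j hjS]
      · rfl
    have hrw : ∀ ω : Ω,
        (∑ᶠ i : ℤ, ∑ᶠ j : ℤ, if 0 ≤ i ∧ i < j then
          v i * v j * y (t - (i : ZMod T)) ω * y (t - (j : ZMod T)) ω else 0)
        = ∑ i ∈ SM, ∑ j ∈ SM, if 0 ≤ i ∧ i < j then
            v i * v j * y (t - (i : ZMod T)) ω * y (t - (j : ZMod T)) ω else 0 := by
      intro ω
      rw [finsum_congr (fun i => inner_eq i ω)]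
      apply finsum_eq_sum_of_support_subset
      intro i hi
      simp only [Function.mem_support] at hi
      by_contra hiS
      apply hi
      apply Finset.sum_eq_zero
      intro j _
      split_ifs
      · simp [hv0 i hiS]
      · rfl
    have hint : ∀ i j : ℤ, Integrable (fun ω => if 0 ≤ i ∧ i < j then
        v i * v j * y (t - (i : ZMod T)) ω * y (t - (j : ZMod T)) ω else 0) := by
      intro i j
      by_cases hc : 0 ≤ i ∧ i < j
      · simp only [if_pos hc]
        exact ((hMul (t - (i : ZMod T)) (t - (j : ZMod T))).const_mul (v i * v j)).congr
          (Filter.Eventually.of_forall fun ω => by ring)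
      · simp only [if_neg hc]
        exact integrable_const 0
    simp only [hrw]
    rw [integral_finset_sum _ (fun i _ => integrable_finset_sum _ (fun j _ => hint i j))]
    apply Finset.sum_eq_zero
    intro i hi
    rw [integral_finset_sum _ (fun j _ => hint i j)]
    apply Finset.sum_eq_zero
    intro j hj
    by_cases hc : 0 ≤ i ∧ i < j
    · simp only [if_pos hc]
      have hne : (t - (i : ZMod T)) ≠ (t - (j : ZMod T)) := by
        intro e
        have hij : (i : ZMod T) = (j : ZMod T) := sub_right_injective e
        have := hinj i hi j hj hij
        omega
      simp only [mul_assoc]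
      rw [integral_const_mul, integral_const_mul, huncorr _ _ hne]
      ring
    · simp only [if_neg hc, integral_zero]
  · -- Part 2
    have hrwW : ∀ (t : ZMod T) (ω : Ω),
        (∑ᶠ l : ℤ, v l * y (t - (l : ZMod T)) ω) = ∑ l ∈ SM, v l * y (t - (l : ZMod T)) ω := by
      intro t ω
      apply finsum_eq_sum_of_support_subset
      intro l hl
      simp only [Function.mem_support] at hl
      by_contra hlS
      exact hl (by simp [hv0 l hlS])
    simp only [hrwW, pow_two]
    have hsq : ∀ (t : ZMod T) (ω : Ω),
        (∑ l ∈ SM, v l * y (t - (l : ZMod T)) ω) * (∑ l ∈ SM, v l * y (t - (l : ZMod T)) ω)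
        = ∑ l ∈ SM, ∑ l' ∈ SM,
            (v l * v l') * (y (t - (l : ZMod T)) ω * y (t - (l' : ZMod T)) ω) := by
      intro t ω
      rw [Finset.sum_mul_sum]
      apply Finset.sum_congr rfl; intro l _
      apply Finset.sum_congr rfl; intro l' _
      ring
    simp only [hsq]
    rw [integral_finset_sum _ (fun t _ => integrable_finset_sum _ (fun l _ =>
      integrable_finset_sum _ (fun l' _ => (hMul _ _).const_mul _)))]
    have step : ∀ t : ZMod T,
        (∫ ω, ∑ l ∈ SM, ∑ l' ∈ SM,
          (v l * v l') * (y (t - (l : ZMod T)) ω * y (t - (l' : ZMod T)) ω))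
        = ∑ l ∈ SM, (v l * v l) * ∫ ω, y (t - (l : ZMod T)) ω * y (t - (l : ZMod T)) ω := by
      intro t
      rw [integral_finset_sum _ (fun l _ => integrable_finset_sum _ (fun l' _ =>
        (hMul _ _).const_mul _))]
      apply Finset.sum_congr rfl
      intro l hl
      rw [integral_finset_sum _ (fun l' _ => (hMul _ _).const_mul _)]
      rw [Finset.sum_eq_single l]
      · rw [integral_const_mul]
      · intro b hb hne
        have hne2 : (t - (l : ZMod T)) ≠ (t - (b : ZMod T)) := by
          intro e
          exact hne ((hinj l hl b hb (sub_right_injective e)).symm)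
        rw [integral_const_mul, huncorr _ _ hne2, mul_zero]
      · intro hnot
        exact absurd hl hnot
    rw [Finset.sum_congr rfl (fun t _ => step t), Finset.sum_comm]
    have reidx : ∀ l ∈ SM,
        (∑ t : ZMod T, (v l * v l) * ∫ ω, y (t - (l : ZMod T)) ω * y (t - (l : ZMod T)) ω)
        = (v l * v l) * ∑ t : ZMod T, ∫ ω, y t ω * y t ω := by
      intro l _
      rw [← Finset.mul_sum]
      congr 1
      exact Equiv.sum_comp (Equiv.subRight ((l : ZMod T))) (fun s => ∫ ω, y s ω * y s ω)
    rw [Finset.sum_congr rfl reidx, ← Finset.sum_mul]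
    have hnorm : (∑ l ∈ SM, v l * v l) = 1 / 2 ^ (m' + 1) := by
      have horth := wp_orth hsupp gsupp horth_h horth_g m' n 0
      simp only [mul_zero, add_zero, eq_self_iff_true, if_true, mul_one] at horth
      rw [← horth]
      exact (wp_finsum_eq_sum hsupp gsupp m' n v).symm
    rw [hnorm]
    rw [integral_finset_sum _ (fun t _ => hMul t t)]
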